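/- Suppose every job j ∈ J satisfies c_min/2 < d_j ≤ c_min. Then J can be partitioned into at most 4r feasible rounds, where r is the congestion of the instance. -/

import Mathlib

open scoped Classical

namespace PathUFP

variable {ι : Type*}

/-- Job `i` uses the edge `e_{k+1}` (for `k : Fin m`, edges being 1-indexed
`e_1, …, e_m`) iff `s_i < k + 1 ≤ t_i`, i.e. iff `s_i ≤ k < t_i`. -/
def uses (s t : ι → ℕ) {m : ℕ} (i : ι) (k : Fin m) : Prop :=
  s i ≤ (k : ℕ) ∧ (k : ℕ) < t i

/-- The load of edge `e_{k+1}`: total demand of the jobs using it. -/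
noncomputable def load [Fintype ι] (s t : ι → ℕ) (d : ι → ℝ) {m : ℕ} (k : Fin m) : ℝ :=
  ∑ i : ι, if uses s t i k then d i else 0

/-- The congestion `r = max_k ⌈l_k / c_k⌉` of the instance. -/
noncomputable def congestion [Fintype ι] (s t : ι → ℕ) (d : ι → ℝ) {m : ℕ}
    (hm : 0 < m) (c : Fin m → ℝ) : ℤ :=
  Finset.univ.sup' ⟨⟨0, hm⟩, Finset.mem_univ _⟩ fun k => ⌈load s t d k / c k⌉

/-- The minimum edge capacity. -/
noncomputable def cmin {m : ℕ} (hm : 0 < m) (c : Fin m → ℝ) : ℝ :=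
  Finset.univ.inf' ⟨⟨0, hm⟩, Finset.mem_univ _⟩ c

/-- `f` is a Round-UFP packing of the jobs into `K` feasible rounds: on each round and
each edge, the total demand of the jobs of that round using that edge is at most the
capacity of the edge. -/
def IsPacking [Fintype ι] (s t : ι → ℕ) (d : ι → ℝ) {m : ℕ} (c : Fin m → ℝ)
    {K : ℕ} (f : ι → Fin K) : Prop :=
  ∀ (r : Fin K) (k : Fin m),
    (∑ i : ι, if f i = r ∧ uses s t i k then d i else 0) ≤ c k

end PathUFP


namespace RoundUFPAux

def ind (p : ℕ × ℕ) (k : ℕ) : ℕ := if p.1 ≤ k ∧ k < p.2 then 1 else 0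

lemma ind_le_one (p : ℕ × ℕ) (k : ℕ) : ind p k ≤ 1 := by
  unfold ind; split <;> omega

def cov (F : Multiset (ℕ × ℕ)) (k : ℕ) : ℕ :=
  (F.filter (fun p => p.1 ≤ k ∧ k < p.2)).card

@[simp] lemma cov_zero (k : ℕ) : cov 0 k = 0 := rfl

lemma cov_cons (p : ℕ × ℕ) (F : Multiset (ℕ × ℕ)) (k : ℕ) :
    cov (p ::ₘ F) k = ind p k + cov F k := by
  unfold cov ind
  rw [Multiset.filter_cons]
  split <;> simp [Multiset.card_cons] <;> omega

lemma cov_mono {G F : Multiset (ℕ × ℕ)} (h : G ≤ F) (k : ℕ) : cov G k ≤ cov F k :=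
  Multiset.card_le_card (Multiset.filter_le_filter _ h)

lemma cov_eq_zero {F : Multiset (ℕ × ℕ)} {c k : ℕ} (h : ∀ p ∈ F, p.2 ≤ c)
    (hk : c ≤ k) : cov F k = 0 := by
  unfold cov
  rw [Multiset.card_eq_zero, Multiset.filter_eq_nil]
  rintro p hp ⟨-, h2⟩
  exact absurd (h p hp) (by omega)

def mea (F : Multiset (ℕ × ℕ)) : ℕ := (F.map (fun p => p.2 - p.1)).sum

@[simp] lemma mea_zero : mea 0 = 0 := rfl

lemma mea_cons (p : ℕ × ℕ) (F : Multiset (ℕ × ℕ)) :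
    mea (p ::ₘ F) = (p.2 - p.1) + mea F := by
  unfold mea; rw [Multiset.map_cons, Multiset.sum_cons]

lemma exists_max {α : Type*} (g : α → ℕ) (F : Multiset α) (h : F ≠ 0) :
    ∃ x ∈ F, ∀ p ∈ F, g p ≤ g x := by
  induction F using Multiset.induction_on with
  | empty => exact absurd rfl h
  | cons a s ih =>
    rcases eq_or_ne s 0 with rfl | hs
    · exact ⟨a, Multiset.mem_cons_self _ _, by simp⟩
    · obtain ⟨y, hy, hymax⟩ := ih hs
      rcases le_total (g a) (g y) with hle | hle
      · refine ⟨y, Multiset.mem_cons_of_mem hy, fun p hp => ?_⟩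
        rcases Multiset.mem_cons.1 hp with rfl | hp
        · exact hle
        · exact hymax p hp
      · refine ⟨a, Multiset.mem_cons_self _ _, fun p hp => ?_⟩
        rcases Multiset.mem_cons.1 hp with rfl | hp
        · exact le_rfl
        · exact (hymax p hp).trans hle

lemma le_of_le_cons_of_not_mem {α : Type*} [DecidableEq α] {G s : Multiset α} {a : α}
    (h : G ≤ a ::ₘ s) (ha : a ∉ G) : G ≤ s := by
  rw [Multiset.le_iff_count]
  intro b
  have hb := Multiset.le_iff_count.mp h b
  rw [Multiset.count_cons] at hb
  by_cases hba : b = a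
  · subst hba
    simp [Multiset.count_eq_zero.mpr ha]
  · simpa [hba] using hb

/-- Balance predicate: `G` is (as a sub-multiset of `F`) a near-half of `F`
at every point. -/
def Bal (F G : Multiset (ℕ × ℕ)) : Prop :=
  ∀ k, cov F k ≤ 2 * cov G k + 1 ∧ 2 * cov G k ≤ cov F k + 1

/-- Key step: two intervals with the same right endpoint get replaced by their
symmetric difference. -/
lemma step_two {N : ℕ}
    (IH : ∀ F : Multiset (ℕ × ℕ), mea F ≤ N → (∀ p ∈ F, p.1 < p.2) →
      ∃ G, G ≤ F ∧ Bal F G)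
    (a b : ℕ × ℕ) (F₂ : Multiset (ℕ × ℕ)) (hab2 : a.2 = b.2) (h1 : a.1 < b.1)
    (hb : b.1 < b.2) (hval : ∀ p ∈ F₂, p.1 < p.2)
    (hmea : mea (a ::ₘ b ::ₘ F₂) ≤ N + 1) :
    ∃ G, G ≤ a ::ₘ b ::ₘ F₂ ∧ Bal (a ::ₘ b ::ₘ F₂) G := by
  set z : ℕ × ℕ := (a.1, b.1) with hz_def
  have hmea' : mea (z ::ₘ F₂) ≤ N := by
    rw [mea_cons] at hmea ⊢
    rw [mea_cons] at hmea
    simp only [hz_def]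
    omega
  have hval' : ∀ p ∈ z ::ₘ F₂, p.1 < p.2 := by
    intro p hp
    rcases Multiset.mem_cons.1 hp with rfl | hp
    · exact h1
    · exact hval p hp
  obtain ⟨G', hG'le, hbal⟩ := IH _ hmea' hval'
  have hsplit : ∀ k, ind a k = ind z k + ind b k := by
    intro k
    simp only [ind, hz_def]
    split_ifs <;> omega
  by_cases hz : z ∈ G'
  · refine ⟨a ::ₘ G'.erase z, ?_, ?_⟩
    · refine Multiset.cons_le_cons a ?_
      have := Multiset.erase_le_erase z hG'le
      rw [Multiset.erase_cons_head] at this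
      exact this.trans (Multiset.le_cons_self _ _)
    · intro k
      have h1' := hbal k
      have e1 : cov G' k = ind z k + cov (G'.erase z) k := by
        conv_lhs => rw [← Multiset.cons_erase hz]
        rw [cov_cons]
      simp only [cov_cons] at h1' ⊢
      have := hsplit k
      omega
  · have hG'F₂ : G' ≤ F₂ := le_of_le_cons_of_not_mem hG'le hz
    refine ⟨b ::ₘ G', ?_, ?_⟩
    · rw [Multiset.cons_swap]
      exact Multiset.cons_le_cons b (hG'F₂.trans (Multiset.le_cons_self _ _))
    · intro k
      have h1' := hbal k
      simp only [cov_cons] at h1' ⊢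
      have := hsplit k
      omega


lemma mem_len_le_mea {F : Multiset (ℕ × ℕ)} {x : ℕ × ℕ} (hx : x ∈ F) :
    x.2 - x.1 ≤ mea F :=
  Multiset.single_le_sum (fun _ _ => Nat.zero_le _) _
    (Multiset.mem_map_of_mem _ hx)

theorem bal_exists : ∀ (N : ℕ) (F : Multiset (ℕ × ℕ)), mea F ≤ N →
    (∀ p ∈ F, p.1 < p.2) → ∃ G, G ≤ F ∧ Bal F G := by
  intro N
  induction N with
  | zero =>
    intro F hmea hval
    rcases eq_or_ne F 0 with rfl | hF
    · exact ⟨0, le_rfl, fun k => by simp⟩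
    · obtain ⟨x, hx⟩ := Multiset.exists_mem_of_ne_zero hF
      have := mem_len_le_mea hx
      have := hval x hx
      omega
  | succ N IH =>
    intro F hmea hval
    rcases eq_or_ne F 0 with rfl | hF
    · exact ⟨0, le_rfl, fun k => by simp⟩
    obtain ⟨x, hxF, hxmax⟩ := exists_max Prod.snd F hF
    have hFx : x ::ₘ F.erase x = F := Multiset.cons_erase hxF
    set F₁ := F.erase x with hF₁
    have hF₁le : F₁ ≤ F := Multiset.erase_le x F
    have hvalF₁ : ∀ p ∈ F₁, p.1 < p.2 := fun p hp => hval p (Multiset.mem_of_le hF₁le hp)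
    by_cases hy : ∃ y ∈ F₁, y.2 = x.2
    · -- two intervals sharing the maximal right endpoint
      obtain ⟨y, hyF₁, hy2⟩ := hy
      have hFy : y ::ₘ F₁.erase y = F₁ := Multiset.cons_erase hyF₁
      set F₂ := F₁.erase y with hF₂
      have hvalF₂ : ∀ p ∈ F₂, p.1 < p.2 := fun p hp =>
        hvalF₁ p (Multiset.mem_of_le (Multiset.erase_le y F₁) hp)
      have hFxy : x ::ₘ y ::ₘ F₂ = F := by rw [hFy, hFx]
      by_cases hxy1 : x.1 = y.1
      · -- identical intervals, remove both, one on each side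
        have hmea₂ : mea F₂ ≤ N := by
          have h1 := hval x hxF
          have h2 := hvalF₁ y hyF₁
          rw [← hFxy, mea_cons, mea_cons] at hmea
          omega
        obtain ⟨G', hG'le, hbal⟩ := IH F₂ hmea₂ hvalF₂
        refine ⟨x ::ₘ G', ?_, ?_⟩
        · rw [← hFxy]
          exact Multiset.cons_le_cons x (hG'le.trans (Multiset.le_cons_self _ _))
        · intro k
          have h1' := hbal k
          have hindeq : ind x k = ind y k := by
            simp only [ind, hxy1, hy2.symm]
          rw [← hFxy]
          simp only [cov_cons]
          omega
      · -- distinct left endpoints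
        rcases Nat.lt_or_ge x.1 y.1 with hlt | hge
        · have hres := step_two IH x y F₂ hy2.symm hlt (hvalF₁ y hyF₁) hvalF₂
            (by rw [hFxy]; exact hmea)
          rw [hFxy] at hres
          exact hres
        · have hlt : y.1 < x.1 := lt_of_le_of_ne hge (fun h => hxy1 h.symm)
          have hswap : y ::ₘ x ::ₘ F₂ = F := by rw [Multiset.cons_swap, hFxy]
          have hres := step_two IH y x F₂ hy2 hlt (hval x hxF) hvalF₂
            (by rw [hswap]; exact hmea)
          rw [hswap] at hres
          exact hres
    · -- x is the unique interval attaining the maximal right endpoint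
      push_neg at hy
      rcases eq_or_ne F₁ 0 with hF₁0 | hF₁0
      · -- singleton
        refine ⟨F, le_rfl, fun k => ?_⟩
        rw [← hFx, hF₁0]
        simp only [cov_cons, cov_zero]
        have := ind_le_one x k
        omega
      · obtain ⟨w, hwF₁, hwmax⟩ := exists_max Prod.snd F₁ hF₁0
        set T := w.2 with hT
        have hTlt : T < x.2 := by
          have h1 : w.2 ≤ x.2 := hxmax w (Multiset.mem_of_le hF₁le hwF₁)
          have h2 : w.2 ≠ x.2 := hy w hwF₁
          omega
        have hF₁bd : ∀ p ∈ F₁, p.2 ≤ T := hwmax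
        by_cases hts : T ≤ x.1
        · -- x is disjoint from (and to the right of) everything else
          have hmea₁ : mea F₁ ≤ N := by
            have h1 := hval x hxF
            rw [← hFx, mea_cons] at hmea
            omega
          obtain ⟨G', hG'le, hbal⟩ := IH F₁ hmea₁ hvalF₁
          refine ⟨x ::ₘ G', ?_, fun k => ?_⟩
          · rw [← hFx]; exact Multiset.cons_le_cons x hG'le
          · rcases Nat.lt_or_ge k x.1 with hk | hk
            · have hx0 : ind x k = 0 := by
                simp only [ind]
                rw [if_neg]
                omega
              rw [← hFx]
              simp only [cov_cons, hx0]
              have := hbal k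
              omega
            · have hcF₁ : cov F₁ k = 0 := cov_eq_zero hF₁bd (hts.trans hk)
              have hcG' : cov G' k = 0 :=
                Nat.eq_zero_of_le_zero ((cov_mono hG'le k).trans hcF₁.le)
              rw [← hFx]
              simp only [cov_cons, hcF₁, hcG']
              have := ind_le_one x k
              omega
        · -- shrink x down to the second largest right endpoint
          push_neg at hts
          set z : ℕ × ℕ := (x.1, T) with hz_def
          have hmea' : mea (z ::ₘ F₁) ≤ N := by
            rw [← hFx, mea_cons] at hmea
            rw [mea_cons]
            have h1 := hval x hxF
            simp only [hz_def]
            omega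
          have hval' : ∀ p ∈ z ::ₘ F₁, p.1 < p.2 := by
            intro p hp
            rcases Multiset.mem_cons.1 hp with rfl | hp
            · exact hts
            · exact hvalF₁ p hp
          obtain ⟨G', hG'le, hbal⟩ := IH _ hmea' hval'
          by_cases hzG : z ∈ G'
          · refine ⟨x ::ₘ G'.erase z, ?_, fun k => ?_⟩
            · rw [← hFx]
              refine Multiset.cons_le_cons x ?_
              have := Multiset.erase_le_erase z hG'le
              rwa [Multiset.erase_cons_head] at this
            · have e1 : cov G' k = ind z k + cov (G'.erase z) k := by
                conv_lhs => rw [← Multiset.cons_erase hzG]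
                rw [cov_cons]
              have h1' := hbal k
              simp only [cov_cons] at h1'
              rw [← hFx]
              simp only [cov_cons]
              rcases Nat.lt_or_ge k T with hk | hk
              · have hsplit : ind x k = ind z k := by
                  simp only [ind, hz_def]
                  split_ifs <;> omega
                omega
              · have hcF₁ : cov F₁ k = 0 := cov_eq_zero hF₁bd hk
                have hz0 : ind z k = 0 := by
                  simp only [ind, hz_def]
                  rw [if_neg]
                  omega
                have hcG' : cov G' k ≤ 0 := by
                  have := cov_mono hG'le k
                  simp only [cov_cons, hcF₁, hz0] at this
                  omega
                have := ind_le_one x k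
                omega
          · have hG'F₁ : G' ≤ F₁ := le_of_le_cons_of_not_mem hG'le hzG
            refine ⟨G', ?_, fun k => ?_⟩
            · rw [← hFx]
              exact hG'F₁.trans (Multiset.le_cons_self _ _)
            · have h1' := hbal k
              simp only [cov_cons] at h1'
              rw [← hFx]
              simp only [cov_cons]
              rcases Nat.lt_or_ge k T with hk | hk
              · have hsplit : ind x k = ind z k := by
                  simp only [ind, hz_def]
                  split_ifs <;> omega
                omega
              · have hcF₁ : cov F₁ k = 0 := cov_eq_zero hF₁bd hk
                have hcG' : cov G' k = 0 :=
                  Nat.eq_zero_of_le_zero ((cov_mono hG'F₁ k).trans hcF₁.le)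
                have := ind_le_one x k
                omega

section FinsetPart

variable {ι : Type*} [Fintype ι] (s t : ι → ℕ)

/-- number of jobs of `S` using point `k`. -/
def cnt (S : Finset ι) (k : ℕ) : ℕ := (S.filter (fun i => s i ≤ k ∧ k < t i)).card

lemma cnt_eq_cov (S : Finset ι) (k : ℕ) :
    cnt s t S k = cov (S.val.map (fun i => (s i, t i))) k := by
  unfold cnt cov
  rw [Multiset.filter_map, Multiset.card_map]
  rw [Finset.card_def, Finset.filter_val]
  rfl

lemma exists_le_map_multiset {α β : Type*} [DecidableEq β] (φ : α → β) :
    ∀ (u : Multiset α) (G : Multiset β), G ≤ u.map φ → ∃ T, T ≤ u ∧ T.map φ = G := by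
  intro u
  induction u using Multiset.induction_on with
  | empty =>
    intro G hG
    simp only [Multiset.map_zero, Multiset.le_zero] at hG
    exact ⟨0, le_rfl, by simp [hG]⟩
  | cons a u ih =>
    intro G hG
    rw [Multiset.map_cons] at hG
    by_cases hmem : φ a ∈ G
    · have h1 : G.erase (φ a) ≤ u.map φ := by
        have := Multiset.erase_le_erase (φ a) hG
        rwa [Multiset.erase_cons_head] at this
      obtain ⟨T, hT, hTm⟩ := ih _ h1
      refine ⟨a ::ₘ T, Multiset.cons_le_cons a hT, ?_⟩
      rw [Multiset.map_cons, hTm, Multiset.cons_erase hmem]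
    · have h1 : G ≤ u.map φ := le_of_le_cons_of_not_mem hG hmem
      obtain ⟨T, hT, hTm⟩ := ih _ h1
      exact ⟨T, hT.trans (Multiset.le_cons_self _ _), hTm⟩

/-- Every finite set of jobs has a near-half subset at every point. -/
theorem exists_balanced_subset (hst : ∀ i, s i < t i) (S : Finset ι) :
    ∃ B ⊆ S, ∀ k, cnt s t S k ≤ 2 * cnt s t B k + 1 ∧
      2 * cnt s t B k ≤ cnt s t S k + 1 := by
  set φ : ι → ℕ × ℕ := fun i => (s i, t i) with hφ
  set F : Multiset (ℕ × ℕ) := S.val.map φ with hF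
  have hval : ∀ p ∈ F, p.1 < p.2 := by
    intro p hp
    rw [hF, Multiset.mem_map] at hp
    obtain ⟨i, -, rfl⟩ := hp
    exact hst i
  obtain ⟨G, hGF, hbal⟩ := bal_exists (mea F) F le_rfl hval
  obtain ⟨T, hTle, hTmap⟩ := exists_le_map_multiset φ S.val G hGF
  have hnodup : T.Nodup := Multiset.nodup_of_le hTle S.nodup
  refine ⟨⟨T, hnodup⟩, ?_, ?_⟩
  · rw [← Finset.val_le_iff]
    exact hTle
  · intro k
    have h1 : cnt s t S k = cov F k := cnt_eq_cov s t S k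
    have h2 : cnt s t ⟨T, hnodup⟩ k = cov G k := by
      rw [cnt_eq_cov]
      show cov (Multiset.map φ T) k = _
      rw [hTmap]
    rw [h1, h2]
    exact hbal k

lemma sq_rebalance_int (x y u v : ℤ) (hs : x + y = u + v) (h1 : u ≤ v + 1) (h2 : v ≤ u + 1) :
    (u ^ 2 + v ^ 2 ≤ x ^ 2 + y ^ 2) ∧ (y + 2 ≤ x → u ^ 2 + v ^ 2 + 2 ≤ x ^ 2 + y ^ 2) := by
  have hc : x - y = (u - v) + 2 * (v - y) := by linarith
  have hd2 : (u - v) ^ 2 ≤ 1 := by nlinarith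
  have hmain : (u - v) ^ 2 ≤ (x - y) ^ 2 := by
    rcases lt_trichotomy (v - y) 0 with h | h | h
    · have h3 : (v - y) + (u - v) ≤ 0 := by linarith
      have h4 : 0 ≤ (v - y) * ((v - y) + (u - v)) := by nlinarith
      nlinarith [h4, hc]
    · rw [hc, h]; ring_nf; omega
    · have h3 : 0 ≤ (v - y) + (u - v) := by linarith
      have h4 : 0 ≤ (v - y) * ((v - y) + (u - v)) := mul_nonneg h.le h3
      nlinarith [h4, hc]
  have i1 : 2 * (u ^ 2 + v ^ 2) = (u + v) ^ 2 + (u - v) ^ 2 := by ring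
  have i2 : 2 * (x ^ 2 + y ^ 2) = (x + y) ^ 2 + (x - y) ^ 2 := by ring
  have i3 : (u + v) ^ 2 = (x + y) ^ 2 := by rw [hs]
  constructor
  · linarith
  · intro hxy
    have h4 : 4 ≤ (x - y) ^ 2 := by nlinarith
    linarith

lemma sq_rebalance {a b a' b' : ℕ} (hsum : a' + b' = a + b) (h1 : a' ≤ b' + 1)
    (h2 : b' ≤ a' + 1) :
    (a' ^ 2 + b' ^ 2 ≤ a ^ 2 + b ^ 2) ∧ (b + 2 ≤ a → a' ^ 2 + b' ^ 2 < a ^ 2 + b ^ 2) := by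
  have := sq_rebalance_int a b a' b' (by omega) (by omega) (by omega)
  constructor
  · have h := this.1
    zify
    exact h
  · intro hba
    have h := this.2 (by omega)
    zify
    omega

/-- number of jobs of color `q` using point `k`. -/
def cntf {K : ℕ} (f : ι → Fin K) (q : Fin K) (k : ℕ) : ℕ :=
  cnt s t (Finset.univ.filter fun i => f i = q) k

lemma cnt_le_of_subset {S S' : Finset ι} (h : S ⊆ S') (k : ℕ) :
    cnt s t S k ≤ cnt s t S' k :=
  Finset.card_le_card (Finset.filter_subset_filter _ h)

lemma sum_cntf {K : ℕ} (f : ι → Fin K) (k : ℕ) :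
    ∑ q, cntf s t f q k = cnt s t Finset.univ k := by
  unfold cntf cnt
  simp only [Finset.filter_filter, Finset.card_filter]
  rw [Finset.sum_comm]
  refine Finset.sum_congr rfl fun i _ => ?_
  by_cases hP : s i ≤ k ∧ k < t i
  · simp only [hP, and_true]
    rw [Finset.sum_ite_eq Finset.univ (f i) (fun _ => 1)]
    simp
  · simp [hP]

lemma cnt_union_of_disjoint [DecidableEq ι] {A C : Finset ι} (h : Disjoint A C) (k : ℕ) :
    cnt s t (A ∪ C) k = cnt s t A k + cnt s t C k := by
  unfold cnt
  rw [Finset.filter_union]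
  exact Finset.card_union_of_disjoint (Finset.disjoint_filter_filter h)


lemma cntf_zero_of_ge {K : ℕ} (f : ι → Fin K) (q : Fin K) {m k : ℕ}
    (htm : ∀ i, t i ≤ m) (hk : m ≤ k) : cntf s t f q k = 0 := by
  unfold cntf cnt
  rw [Finset.card_eq_zero, Finset.filter_eq_empty_iff]
  rintro i - ⟨-, h2⟩
  exact absurd (htm i) (by omega)

lemma descent (hst : ∀ i, s i < t i) (m : ℕ) (htm : ∀ i, t i ≤ m)
    (K : ℕ) (f : ι → Fin K)
    (hbad : ¬ ∀ (q : Fin K) (k : ℕ),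
      K * cntf s t f q k ≤ cnt s t Finset.univ k + (K - 1)) :
    ∃ f' : ι → Fin K,
      (∑ k ∈ Finset.range m, ∑ q, (cntf s t f' q k) ^ 2) <
        ∑ k ∈ Finset.range m, ∑ q, (cntf s t f q k) ^ 2 := by
  classical
  push_neg at hbad
  obtain ⟨q, k0, hbadqk⟩ := hbad
  have hK : 0 < K := Fin.pos q
  -- the bad point is a real edge
  have hk0m : k0 < m := by
    by_contra hk0m
    have h0 : cntf s t f q k0 = 0 := cntf_zero_of_ge s t f q htm (by omega)
    rw [h0, Nat.mul_zero] at hbadqk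
    omega
  -- there is a color with a much smaller count at `k0`
  have hp : ∃ p, cntf s t f p k0 + 2 ≤ cntf s t f q k0 := by
    by_contra hpc
    push_neg at hpc
    have hsum := sum_cntf s t f k0
    have hle : ∀ p : Fin K, p ∈ Finset.univ →
        cntf s t f q k0 ≤ (if p = q then cntf s t f q k0 else cntf s t f p k0 + 1) := by
      intro p _
      split
      · exact le_rfl
      · have := hpc p
        omega
    have h1 : K * cntf s t f q k0 ≤
        ∑ p : Fin K, (if p = q then cntf s t f q k0 else cntf s t f p k0 + 1) := by
      calc K * cntf s t f q k0 = ∑ _p : Fin K, cntf s t f q k0 := by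
            rw [Finset.sum_const, Finset.card_univ, Fintype.card_fin, smul_eq_mul]
        _ ≤ _ := Finset.sum_le_sum hle
    have h2 : ∑ p : Fin K, (if p = q then cntf s t f q k0 else cntf s t f p k0 + 1)
        = cntf s t f q k0 + ∑ p ∈ Finset.univ.erase q, (cntf s t f p k0 + 1) := by
      rw [← Finset.add_sum_erase _ _ (Finset.mem_univ q), if_pos rfl]
      congr 1
      refine Finset.sum_congr rfl fun p hp => ?_
      rw [if_neg (Finset.mem_erase.1 hp).1]
    have h3 : ∑ p ∈ Finset.univ.erase q, (cntf s t f p k0 + 1)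
        = (∑ p ∈ Finset.univ.erase q, cntf s t f p k0) + (K - 1) := by
      rw [Finset.sum_add_distrib, Finset.sum_const, smul_eq_mul, mul_one,
        Finset.card_erase_of_mem (Finset.mem_univ q), Finset.card_univ, Fintype.card_fin]
    have h4 : cntf s t f q k0 + ∑ p ∈ Finset.univ.erase q, cntf s t f p k0
        = ∑ p : Fin K, cntf s t f p k0 :=
      Finset.add_sum_erase Finset.univ (fun p => cntf s t f p k0) (Finset.mem_univ q)
    omega
  obtain ⟨p, hp2⟩ := hp
  have hpq : p ≠ q := by
    intro h
    rw [h] at hp2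
    omega
  -- rebalance colors p and q
  set S : Finset ι := Finset.univ.filter (fun i => f i = q ∨ f i = p) with hS
  obtain ⟨B, hBS, hbal⟩ := exists_balanced_subset s t hst S
  set f' : ι → Fin K :=
    (fun i => if f i = q ∨ f i = p then (if i ∈ B then q else p) else f i) with hf'
  have hBmem : ∀ i ∈ B, f i = q ∨ f i = p := by
    intro i hi
    have := hBS hi
    rw [hS, Finset.mem_filter] at this
    exact this.2
  have eqq : Finset.univ.filter (fun i => f' i = q) = B := by
    ext i
    simp only [Finset.mem_filter, Finset.mem_univ, true_and, hf']
    constructor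
    · intro h
      by_cases hfi : f i = q ∨ f i = p
      · rw [if_pos hfi] at h
        by_cases hiB : i ∈ B
        · exact hiB
        · rw [if_neg hiB] at h
          exact absurd h hpq
      · rw [if_neg hfi] at h
        exact absurd (Or.inl h) hfi
    · intro h
      rw [if_pos (hBmem i h), if_pos h]
  have eqp : Finset.univ.filter (fun i => f' i = p) = S \ B := by
    ext i
    simp only [Finset.mem_filter, Finset.mem_univ, true_and, Finset.mem_sdiff, hf']
    constructor
    · intro h
      by_cases hfi : f i = q ∨ f i = p
      · rw [if_pos hfi] at h
        by_cases hiB : i ∈ B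
        · rw [if_pos hiB] at h
          exact absurd h.symm hpq
        · exact ⟨by rw [hS, Finset.mem_filter]; exact ⟨Finset.mem_univ i, hfi⟩, hiB⟩
      · rw [if_neg hfi] at h
        exact absurd (Or.inr h) hfi
    · rintro ⟨hiS, hiB⟩
      rw [hS, Finset.mem_filter] at hiS
      rw [if_pos hiS.2, if_neg hiB]
  have eqo : ∀ q' : Fin K, q' ≠ q → q' ≠ p →
      Finset.univ.filter (fun i => f' i = q') = Finset.univ.filter (fun i => f i = q') := by
    intro q' hq'q hq'p
    ext i
    simp only [Finset.mem_filter, Finset.mem_univ, true_and, hf']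
    by_cases hfi : f i = q ∨ f i = p
    · rw [if_pos hfi]
      constructor
      · intro h
        split at h
        · exact absurd h.symm hq'q
        · exact absurd h.symm hq'p
      · intro h
        rcases hfi with hfi | hfi <;> rw [h] at hfi
        · exact absurd hfi hq'q
        · exact absurd hfi hq'p
    · rw [if_neg hfi]
  have addB : ∀ k, cnt s t B k + cnt s t (S \ B) k = cnt s t S k := by
    intro k
    rw [← cnt_union_of_disjoint s t Finset.disjoint_sdiff k,
      Finset.union_sdiff_of_subset hBS]
  have addqp : ∀ k, cntf s t f q k + cntf s t f p k = cnt s t S k := by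
    intro k
    have hd : Disjoint (Finset.univ.filter (fun i => f i = q))
        (Finset.univ.filter (fun i => f i = p)) := by
      rw [Finset.disjoint_left]
      intro i hi1 hi2
      rw [Finset.mem_filter] at hi1 hi2
      exact hpq (hi2.2.symm.trans hi1.2)
    have hu : Finset.univ.filter (fun i => f i = q) ∪ Finset.univ.filter (fun i => f i = p)
        = S := by
      rw [← Finset.filter_or]
    unfold cntf
    rw [← hu, cnt_union_of_disjoint s t hd k]
  -- pointwise comparison of the inner sums
  have key : ∀ k, (∑ q', (cntf s t f' q' k) ^ 2 ≤ ∑ q', (cntf s t f q' k) ^ 2) ∧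
      (k = k0 → ∑ q', (cntf s t f' q' k) ^ 2 < ∑ q', (cntf s t f q' k) ^ 2) := by
    intro k
    have hsplit : ∀ g : Fin K → ℕ, ∑ q', g q' = g q + g p +
        ∑ q' ∈ (Finset.univ.erase q).erase p, g q' := by
      intro g
      have h1 : ∑ q' : Fin K, g q' = g q + ∑ q' ∈ Finset.univ.erase q, g q' :=
        (Finset.add_sum_erase _ g (Finset.mem_univ q)).symm
      have h2 : ∑ q' ∈ Finset.univ.erase q, g q'
          = g p + ∑ q' ∈ (Finset.univ.erase q).erase p, g q' :=
        (Finset.add_sum_erase _ g (Finset.mem_erase.mpr ⟨hpq, Finset.mem_univ p⟩)).symm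
      omega
    have htails : ∑ q' ∈ (Finset.univ.erase q).erase p, (cntf s t f' q' k) ^ 2
        = ∑ q' ∈ (Finset.univ.erase q).erase p, (cntf s t f q' k) ^ 2 := by
      refine Finset.sum_congr rfl fun q' hq' => ?_
      have hq'p : q' ≠ p := (Finset.mem_erase.1 hq').1
      have hq'q : q' ≠ q := (Finset.mem_erase.1 (Finset.mem_erase.1 hq').2).1
      unfold cntf
      rw [eqo q' hq'q hq'p]
    have ha' : cntf s t f' q k = cnt s t B k := by unfold cntf; rw [eqq]
    have hb' : cntf s t f' p k = cnt s t (S \ B) k := by unfold cntf; rw [eqp]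
    have hbalk := hbal k
    have haddB := addB k
    have haddqp := addqp k
    have hsq := sq_rebalance (a := cntf s t f q k) (b := cntf s t f p k)
      (a' := cntf s t f' q k) (b' := cntf s t f' p k)
      (by omega) (by omega) (by omega)
    constructor
    · rw [hsplit (fun q' => (cntf s t f' q' k) ^ 2),
        hsplit (fun q' => (cntf s t f q' k) ^ 2), htails]
      have := hsq.1
      omega
    · intro hk
      subst hk
      rw [hsplit (fun q' => (cntf s t f' q' k) ^ 2),
        hsplit (fun q' => (cntf s t f q' k) ^ 2), htails]
      have := hsq.2 hp2
      omega
  refine ⟨f', Finset.sum_lt_sum (fun k _ => (key k).1) ⟨k0, Finset.mem_range.2 hk0m, ?_⟩⟩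
  exact (key k0).2 rfl

theorem exists_balanced_coloring (hst : ∀ i, s i < t i) (m : ℕ) (htm : ∀ i, t i ≤ m)
    (K : ℕ) (hK : 0 < K) :
    ∃ f : ι → Fin K, ∀ (q : Fin K) (k : ℕ),
      K * cntf s t f q k ≤ cnt s t Finset.univ k + (K - 1) := by
  classical
  suffices h : ∀ (N : ℕ) (f : ι → Fin K),
      (∑ k ∈ Finset.range m, ∑ q, (cntf s t f q k) ^ 2) ≤ N →
      ∃ f' : ι → Fin K, ∀ (q : Fin K) (k : ℕ),
        K * cntf s t f' q k ≤ cnt s t Finset.univ k + (K - 1) by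
    exact h (∑ k ∈ Finset.range m, ∑ q, (cntf s t (fun _ => ⟨0, hK⟩) q k) ^ 2) _ le_rfl
  intro N
  induction N with
  | zero =>
    intro f hf
    by_cases hgood : ∀ (q : Fin K) (k : ℕ),
        K * cntf s t f q k ≤ cnt s t Finset.univ k + (K - 1)
    · exact ⟨f, hgood⟩
    · exfalso
      obtain ⟨f', hf'⟩ := descent s t hst m htm K f hgood
      omega
  | succ N IH =>
    intro f hf
    by_cases hgood : ∀ (q : Fin K) (k : ℕ),
        K * cntf s t f q k ≤ cnt s t Finset.univ k + (K - 1)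
    · exact ⟨f, hgood⟩
    · obtain ⟨f', hf'⟩ := descent s t hst m htm K f hgood
      exact IH f' (by omega)

end FinsetPart

end RoundUFPAux


open PathUFP in
/-- Suppose every job `j ∈ J` satisfies `c_min / 2 < d_j ≤ c_min`.
Then `J` can be partitioned into at most `4r` feasible rounds, where `r` is the
congestion of the instance. -/
theorem packing_of_large_jobs {ι : Type*} [Fintype ι] {m : ℕ} (hm : 0 < m)
    (c : Fin m → ℝ) (hc : ∀ k, 0 < c k)
    (s t : ι → ℕ) (d : ι → ℝ)
    (hst : ∀ i, s i < t i) (htm : ∀ i, t i ≤ m) (hd : ∀ i, 0 < d i)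
    (hlarge : ∀ i, cmin hm c / 2 < d i ∧ d i ≤ cmin hm c) :
    ∃ (K : ℕ) (f : ι → Fin K),
      (K : ℤ) ≤ 4 * congestion s t d hm c ∧ IsPacking s t d c f := by
  classical
  rcases isEmpty_or_nonempty ι with hι | hι
  · refine ⟨0, fun i => isEmptyElim i, ?_, fun q k => q.elim0⟩
    have hload : ∀ k : Fin m, load s t d k = 0 := by
      intro k
      unfold load
      simp
    have hcong : congestion s t d hm c = 0 := by
      unfold congestion
      have h1 : ∀ k ∈ (Finset.univ : Finset (Fin m)),
          ⌈load s t d k / c k⌉ = (fun _ => (0:ℤ)) k := by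
        intro k _
        rw [hload k]
        simp
      exact (Finset.sup'_congr _ rfl h1).trans (Finset.sup'_const _ _)
    rw [hcong]
    simp
  · set r : ℤ := congestion s t d hm c with hr_def
    have hcmin_le : ∀ k, cmin hm c ≤ c k := fun k => Finset.inf'_le _ (Finset.mem_univ k)
    have hcmin_pos : 0 < cmin hm c := by
      unfold cmin
      refine (Finset.lt_inf'_iff ..).mpr ?_
      exact fun k _ => hc k
    have hload_le : ∀ k, load s t d k ≤ (r : ℝ) * c k := by
      intro k
      have h1 : ⌈load s t d k / c k⌉ ≤ r := by
        rw [hr_def]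
        unfold congestion
        exact Finset.le_sup' (fun k => ⌈load s t d k / c k⌉) (Finset.mem_univ k)
      have h2 : load s t d k / c k ≤ (r : ℝ) :=
        le_trans (Int.le_ceil _) (by exact_mod_cast h1)
      rwa [div_le_iff₀ (hc k)] at h2
    have hr1 : 1 ≤ r := by
      obtain ⟨i⟩ := hι
      have hk0 : s i < m := lt_of_lt_of_le (hst i) (htm i)
      set k0 : Fin m := ⟨s i, hk0⟩ with hk0def
      have huse : uses s t i k0 := ⟨le_refl _, hst i⟩
      have hload_pos : 0 < load s t d k0 := by
        unfold load
        apply Finset.sum_pos'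
        · intro j _
          split
          · exact (hd j).le
          · exact le_rfl
        · exact ⟨i, Finset.mem_univ i, by rw [if_pos huse]; exact hd i⟩
      have hceil : 0 < ⌈load s t d k0 / c k0⌉ :=
        Int.ceil_pos.mpr (div_pos hload_pos (hc k0))
      have h2 : ⌈load s t d k0 / c k0⌉ ≤ r := by
        rw [hr_def]
        unfold congestion
        exact Finset.le_sup' (fun k => ⌈load s t d k / c k⌉) (Finset.mem_univ k0)
      omega
    set K : ℕ := (4 * r).toNat with hKdef
    have hKr : (K : ℤ) = 4 * r := Int.toNat_of_nonneg (by omega)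
    have hKpos : 0 < K := by omega
    obtain ⟨f, hf⟩ := RoundUFPAux.exists_balanced_coloring s t hst m htm K hKpos
    refine ⟨K, f, by rw [hKr], ?_⟩
    intro q k
    set u : ℕ := RoundUFPAux.cnt s t Finset.univ (k : ℕ) with hu_def
    set n : ℕ := ⌊c k / cmin hm c⌋₊ with hn_def
    set a : ℕ := RoundUFPAux.cntf s t f q (k : ℕ) with ha_def
    have hsum_eq : (∑ i : ι, if f i = q ∧ uses s t i k then d i else 0)
        = ∑ i ∈ Finset.univ.filter (fun i => f i = q ∧ (s i ≤ (k:ℕ) ∧ (k:ℕ) < t i)), d i := by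
      rw [Finset.sum_filter]
      simp only [uses]
      exact Finset.sum_congr rfl fun i _ => by split_ifs with h; exacts [if_pos h, if_neg h]
    have hcard : (Finset.univ.filter
        (fun i => f i = q ∧ (s i ≤ (k:ℕ) ∧ (k:ℕ) < t i))).card = a := by
      rw [ha_def]
      unfold RoundUFPAux.cntf RoundUFPAux.cnt
      rw [Finset.filter_filter]
    have hsum_le : (∑ i ∈ Finset.univ.filter
        (fun i => f i = q ∧ (s i ≤ (k:ℕ) ∧ (k:ℕ) < t i)), d i) ≤ (a : ℝ) * cmin hm c := by
      rw [← hcard]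
      have := Finset.sum_le_card_nsmul
        (Finset.univ.filter (fun i => f i = q ∧ (s i ≤ (k:ℕ) ∧ (k:ℕ) < t i))) d
        (cmin hm c) (fun i _ => (hlarge i).2)
      rwa [nsmul_eq_mul] at this
    have hmain : (a : ℝ) * cmin hm c ≤ c k := by
      rcases Nat.eq_zero_or_pos u with hu0 | hupos
      · have hau : a ≤ u := by
          rw [ha_def, hu_def]
          exact RoundUFPAux.cnt_le_of_subset s t (Finset.filter_subset _ _) _
        have ha0 : a = 0 := by omega
        rw [ha0]
        simpa using (hc k).le
      · set U : Finset ι := Finset.univ.filter (fun i => s i ≤ (k:ℕ) ∧ (k:ℕ) < t i)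
          with hU_def
        have hU_card : U.card = u := rfl
        have hload_eq : load s t d k = ∑ i ∈ U, d i := by
          unfold load uses
          rw [Finset.sum_filter]
          exact Finset.sum_congr rfl fun i _ => by split_ifs <;> rfl
        have hUne : U.Nonempty := Finset.card_pos.mp (by rw [hU_card]; omega)
        have hload_gt : (u : ℝ) * (cmin hm c / 2) < load s t d k := by
          rw [hload_eq, ← hU_card]
          have := Finset.sum_lt_sum_of_nonempty hUne (fun i _ => (hlarge i).1)
          rwa [Finset.sum_const, nsmul_eq_mul] at this
        have hn1 : 1 ≤ n := by
          rw [hn_def]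
          apply Nat.le_floor
          rw [Nat.cast_one]
          exact (one_le_div hcmin_pos).mpr (hcmin_le k)
        have hckn : c k < ((n:ℝ) + 1) * cmin hm c := by
          have h1 : c k / cmin hm c < (n:ℝ) + 1 := by
            rw [hn_def]
            exact_mod_cast Nat.lt_floor_add_one (c k / cmin hm c)
          rwa [div_lt_iff₀ hcmin_pos] at h1
        have hrpos : (0:ℝ) < (r:ℝ) := by exact_mod_cast (by omega : (0:ℤ) < r)
        have hKreal : (K:ℝ) = 4 * (r:ℝ) := by exact_mod_cast hKr
        have hun : (u:ℝ) < (K:ℝ) * n := by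
          have hA : (u : ℝ) * (cmin hm c / 2) < (r:ℝ) * (((n:ℝ) + 1) * cmin hm c) :=
            lt_of_le_of_lt (le_of_lt (lt_of_lt_of_le hload_gt (hload_le k)))
              (mul_lt_mul_of_pos_left hckn hrpos)
          have h2n : ((n:ℝ) + 1) ≤ 2 * n := by
            have : (1:ℝ) ≤ (n:ℝ) := by exact_mod_cast hn1
            linarith
          have hB : (r:ℝ) * (((n:ℝ) + 1) * cmin hm c) ≤ (K:ℝ) * n * (cmin hm c / 2) := by
            rw [hKreal]
            have hm1 := mul_le_mul_of_nonneg_left h2n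
              (mul_nonneg hrpos.le hcmin_pos.le)
            nlinarith [hm1]
          have hC : (u : ℝ) * (cmin hm c / 2) < (K:ℝ) * n * (cmin hm c / 2) :=
            lt_of_lt_of_le hA hB
          exact lt_of_mul_lt_mul_right hC (by positivity)
        have hunN : u + 1 ≤ K * n := by
          have : (u:ℝ) < ((K * n : ℕ) : ℝ) := by push_cast; exact hun
          exact_mod_cast this
        have han : a ≤ n := by
          by_contra hcon
          push_neg at hcon
          have h5 : K * (n+1) ≤ K * a := Nat.mul_le_mul_left K hcon
          have h7 : K * a ≤ u + (K - 1) := by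
            rw [ha_def, hu_def]
            exact hf q (k:ℕ)
          have hmul : K * (n+1) = K * n + K := by ring
          rw [hmul] at h5
          set X := K * a with hX
          set Y := K * n with hY
          omega
        calc (a:ℝ) * cmin hm c ≤ (n:ℝ) * cmin hm c := by
              apply mul_le_mul_of_nonneg_right _ hcmin_pos.le
              exact_mod_cast han
          _ ≤ c k := by
              have hfl : (n:ℝ) ≤ c k / cmin hm c := by
                rw [hn_def]
                exact Nat.floor_le (div_nonneg (hc k).le hcmin_pos.le)
              rwa [le_div_iff₀ hcmin_pos] at hfl
    rw [hsum_eq]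
    exact le_trans hsum_le hmain
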